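/- There exists a separable metrizable space X that has the perfect set property for clopen subsets but not for open subsets. Concretely, if B is a Bernstein set in [0,1] × [0,1), then X = B ∪ ([0,1] × {1}) ⊆ [0,1]² is connected (hence has only trivial clopen subsets), contains a copy of 2^ω, and B is an uncountable open subset of X containing no copy of 2^ω. -/

import Mathlib

/-- `K` is a homeomorphic copy of the Cantor set `2^ω`. -/
def IsCantorCopy {T : Type} [TopologicalSpace T] (K : Set T) : Prop :=
  ∃ f : (ℕ → Bool) → T, Continuous f ∧ Function.Injective f ∧ Set.range f = K

/-- `A` contains a homeomorphic copy of the Cantor set `2^ω`. -/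
def ContainsCantorCopy {T : Type} [TopologicalSpace T] (A : Set T) : Prop :=
  ∃ K ⊆ A, IsCantorCopy K

/-- `B` is a Bernstein set in the subspace `S`. -/
def BernsteinIn {T : Type} [TopologicalSpace T] (S B : Set T) : Prop :=
  B ⊆ S ∧ ∀ K : Set T, IsCantorCopy K → K ⊆ S → (B ∩ K).Nonempty ∧ ((S \ B) ∩ K).Nonempty

/-- `X` has the perfect set property for (relatively) open subsets. -/
def PSPopen {T : Type} [TopologicalSpace T] (X : Set T) : Prop :=
  ∀ U : Set T, IsOpen U → ¬ (U ∩ X).Countable → ContainsCantorCopy (U ∩ X)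

/-- `X` has the perfect set property for (relatively) clopen subsets. -/
def PSPclopen {T : Type} [TopologicalSpace T] (X : Set T) : Prop :=
  ∀ A : Set T, (∃ U : Set T, IsOpen U ∧ A = U ∩ X) → (∃ C : Set T, IsClosed C ∧ A = C ∩ X) →
    ¬ A.Countable → ContainsCantorCopy A

/-! ### Auxiliary lemmas -/

lemma aux_uncountable_natBool : ¬ Countable (ℕ → Bool) := by
  intro h
  have h1 : Cardinal.mk (ℕ → Bool) ≤ Cardinal.aleph0 := Cardinal.mk_le_aleph0
  rw [Cardinal.mk_arrow] at h1
  simp [Cardinal.mk_bool, Cardinal.two_power_aleph0] at h1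
  exact absurd h1 (not_le.mpr Cardinal.aleph0_lt_continuum)

/-- A nondegenerate horizontal segment in the plane is uncountable. -/
lemma aux_seg_uncountable {a b : ℝ} (c : ℝ) (h : a < b) :
    ¬ (Set.Icc a b ×ˢ ({c} : Set ℝ)).Countable := by
  intro hc
  have h1 : (Prod.fst '' (Set.Icc a b ×ˢ ({c} : Set ℝ))).Countable := hc.image _
  rw [Set.fst_image_prod _ (Set.singleton_nonempty c)] at h1
  have h2 : Cardinal.mk (Set.Icc a b) ≤ Cardinal.aleph0 :=
    Cardinal.le_aleph0_iff_set_countable.mpr h1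
  rw [Cardinal.mk_Icc_real h] at h2
  exact absurd h2 (not_le.mpr Cardinal.aleph0_lt_continuum)

/-- An uncountable closed subset of the plane contains a Cantor copy. -/
lemma aux_cantor_of_closed {C : Set (ℝ × ℝ)} (hC : IsClosed C) (h : ¬ C.Countable) :
    ∃ K ⊆ C, IsCantorCopy K := by
  obtain ⟨f, hr, hc, hi⟩ := hC.exists_nat_bool_injection_of_not_countable h
  exact ⟨Set.range f, hr, f, hc, hi, rfl⟩

lemma aux_seg_closed (a b c : ℝ) : IsClosed (Set.Icc a b ×ˢ ({c} : Set ℝ)) :=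
  isClosed_Icc.prod isClosed_singleton

lemma aux_cantor_in_seg {a b : ℝ} (c : ℝ) (h : a < b) :
    ∃ K ⊆ Set.Icc a b ×ˢ ({c} : Set ℝ), IsCantorCopy K :=
  aux_cantor_of_closed (aux_seg_closed a b c) (aux_seg_uncountable c h)

/-- A nonempty open subset of the plane is uncountable. -/
lemma aux_open_uncountable {V : Set (ℝ × ℝ)} (hV : IsOpen V) (hne : V.Nonempty) :
    ¬ V.Countable := by
  obtain ⟨c, hc⟩ := hne
  obtain ⟨ε, hε, hball⟩ := Metric.isOpen_iff.mp hV c hc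
  have hseg : Set.Icc c.1 (c.1 + ε/2) ×ˢ ({c.2} : Set ℝ) ⊆ V := by
    rintro ⟨t, y⟩ ⟨ht, hy⟩
    simp only [Set.mem_singleton_iff] at hy; subst hy
    apply hball
    rw [Metric.mem_ball, Prod.dist_eq]
    refine max_lt ?_ (by simpa using hε)
    rw [Real.dist_eq, abs_lt]
    exact ⟨by linarith [ht.1], by linarith [ht.2]⟩
  intro hcount
  exact aux_seg_uncountable c.2 (by linarith : c.1 < c.1 + ε/2) (hcount.mono hseg)

noncomputable def e1 : ℝ → ℝ := fun t => (((orderIsoIooNegOneOne ℝ) t : ℝ) + 1) / 2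

lemma e1_cont : Continuous e1 :=
  ((continuous_subtype_val.comp (orderIsoIooNegOneOne ℝ).continuous).add
    continuous_const).div_const 2

lemma e1_inj : Function.Injective e1 := by
  intro s t h
  have : ((orderIsoIooNegOneOne ℝ) s : ℝ) = ((orderIsoIooNegOneOne ℝ) t : ℝ) := by
    unfold e1 at h; linarith [h]
  exact (orderIsoIooNegOneOne ℝ).injective (Subtype.ext this)

lemma e1_range : Set.range e1 = Set.Ioo (0:ℝ) 1 := by
  ext y
  constructor
  · rintro ⟨t, rfl⟩
    have h := ((orderIsoIooNegOneOne ℝ) t).2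
    exact ⟨by simp only [e1]; linarith [h.1], by simp only [e1]; linarith [h.2]⟩
  · intro hy
    have hz : (2*y - 1 : ℝ) ∈ Set.Ioo (-1:ℝ) 1 := ⟨by linarith [hy.1], by linarith [hy.2]⟩
    refine ⟨(orderIsoIooNegOneOne ℝ).symm ⟨2*y - 1, hz⟩, ?_⟩
    simp only [e1, OrderIso.apply_symm_apply]
    ring

/-- The closed unit square minus a countable set is preconnected. -/
lemma aux_square_diff_countable_preconnected {K : Set (ℝ × ℝ)} (hK : K.Countable) :
    IsPreconnected ((Set.Icc (0:ℝ) 1 ×ˢ Set.Icc (0:ℝ) 1) \ K) := by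
  set f2 : ℝ × ℝ → ℝ × ℝ := Prod.map e1 e1 with hf2
  have hcont : Continuous f2 := e1_cont.prodMap e1_cont
  have hinj : Function.Injective f2 := e1_inj.prodMap e1_inj
  have hrange : Set.range f2 = Set.Ioo (0:ℝ) 1 ×ˢ Set.Ioo (0:ℝ) 1 := by
    rw [hf2, Set.range_prodMap, e1_range]
  have hs : (f2 ⁻¹' K).Countable := hK.preimage hinj
  have hrank : (1 : Cardinal) < Module.rank ℝ (ℝ × ℝ) := by
    rw [rank_prod', Module.rank_self]; norm_num
  have hp : IsPathConnected ((f2 ⁻¹' K)ᶜ) := hs.isPathConnected_compl_of_one_lt_rank hrank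
  have hp2 : IsPathConnected (f2 '' (f2 ⁻¹' K)ᶜ) := hp.image hcont
  have him : f2 '' (f2 ⁻¹' K)ᶜ = (Set.Ioo (0:ℝ) 1 ×ˢ Set.Ioo (0:ℝ) 1) \ K := by
    rw [← Set.preimage_compl, Set.image_preimage_eq_inter_range, hrange, Set.diff_eq,
      Set.inter_comm]
  rw [him] at hp2
  have hOK : IsPreconnected ((Set.Ioo (0:ℝ) 1 ×ˢ Set.Ioo (0:ℝ) 1) \ K) :=
    hp2.isConnected.isPreconnected
  apply hOK.subset_closure
  · exact Set.diff_subset_diff_left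
      (Set.prod_mono Set.Ioo_subset_Icc_self Set.Ioo_subset_Icc_self)
  · intro q hq
    rw [mem_closure_iff]
    intro U hU hqU
    have hqO : q ∈ closure (Set.Ioo (0:ℝ) 1 ×ˢ Set.Ioo (0:ℝ) 1) := by
      rw [closure_prod_eq, closure_Ioo (by norm_num : (0:ℝ) ≠ 1)]
      exact hq.1
    have hVne : (U ∩ (Set.Ioo (0:ℝ) 1 ×ˢ Set.Ioo (0:ℝ) 1)).Nonempty :=
      mem_closure_iff.mp hqO U hU hqU
    have hVopen : IsOpen (U ∩ (Set.Ioo (0:ℝ) 1 ×ˢ Set.Ioo (0:ℝ) 1)) :=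
      hU.inter (isOpen_Ioo.prod isOpen_Ioo)
    have hVunc := aux_open_uncountable hVopen hVne
    have hns : ¬ (U ∩ (Set.Ioo (0:ℝ) 1 ×ˢ Set.Ioo (0:ℝ) 1)) ⊆ K :=
      fun h => hVunc (hK.mono h)
    obtain ⟨x, hxV, hxK⟩ := Set.not_subset.mp hns
    exact ⟨x, hxV.1, hxV.2, hxK⟩

theorem psp_clopen_not_psp_open :
    ∀ B : Set (ℝ × ℝ), BernsteinIn (Set.Icc (0:ℝ) 1 ×ˢ Set.Ico (0:ℝ) 1) B →
      IsConnected (B ∪ (Set.Icc (0:ℝ) 1 ×ˢ ({1} : Set ℝ))) ∧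
      ContainsCantorCopy (B ∪ (Set.Icc (0:ℝ) 1 ×ˢ ({1} : Set ℝ))) ∧
      ¬ B.Countable ∧
      (∃ U : Set (ℝ × ℝ), IsOpen U ∧ B = U ∩ (B ∪ (Set.Icc (0:ℝ) 1 ×ˢ ({1} : Set ℝ)))) ∧
      ¬ ContainsCantorCopy B ∧
      PSPclopen (B ∪ (Set.Icc (0:ℝ) 1 ×ˢ ({1} : Set ℝ))) ∧
      ¬ PSPopen (B ∪ (Set.Icc (0:ℝ) 1 ×ˢ ({1} : Set ℝ))) := by
  intro B hB
  set S : Set (ℝ × ℝ) := Set.Icc (0:ℝ) 1 ×ˢ Set.Ico (0:ℝ) 1 with hSdef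
  set T : Set (ℝ × ℝ) := Set.Icc (0:ℝ) 1 ×ˢ ({1} : Set ℝ) with hTdef
  set X : Set (ℝ × ℝ) := B ∪ T with hXdef
  set sq : Set (ℝ × ℝ) := Set.Icc (0:ℝ) 1 ×ˢ Set.Icc (0:ℝ) 1 with hsqdef
  have hBS : B ⊆ S := hB.1
  have hSsq : S ⊆ sq := Set.prod_mono subset_rfl Set.Ico_subset_Icc_self
  have hTsq : T ⊆ sq := Set.prod_mono subset_rfl (by
    intro y hy; rw [Set.mem_singleton_iff] at hy; subst hy; exact ⟨zero_le_one, le_refl 1⟩)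
  have hXsq : X ⊆ sq := Set.union_subset (hBS.trans hSsq) hTsq
  -- a Cantor copy in T
  have hTcantor : ∃ K ⊆ T, IsCantorCopy K := aux_cantor_in_seg 1 one_pos
  -- membership in T from coordinates
  have hTmem : ∀ x : ℝ × ℝ, x ∈ sq → x.2 = 1 → x ∈ T := by
    rintro ⟨x1, x2⟩ hxsq h2
    exact ⟨hxsq.1, h2⟩
  -- X is preconnected
  have hXpre : IsPreconnected X := by
    intro u v hu hv hXuv hne1 hne2
    by_contra hW
    rw [Set.not_nonempty_iff_eq_empty] at hW
    obtain ⟨p, hpX, hpu⟩ := hne1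
    obtain ⟨q, hqX, hqv⟩ := hne2
    set K : Set (ℝ × ℝ) := sq \ (u ∪ v) with hKdef
    have hKX : ∀ x ∈ X, x ∉ K := fun x hx hxK => hxK.2 (hXuv hx)
    have hKS : K ⊆ S := by
      rintro ⟨k1, k2⟩ ⟨hksq, hk2⟩
      refine ⟨hksq.1, hksq.2.1, ?_⟩
      rcases lt_or_eq_of_le hksq.2.2 with h | h
      · exact h
      · exact absurd (hXuv (Or.inr (hTmem (k1, k2) hksq h))) hk2
    have hKclosed : IsClosed K :=
      ((isClosed_Icc.prod isClosed_Icc).sdiff (hu.union hv))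
    have hKcount : K.Countable := by
      by_contra hKc
      obtain ⟨K', hK'K, hK'⟩ := aux_cantor_of_closed hKclosed hKc
      obtain ⟨b, hbB, hbK'⟩ := (hB.2 K' hK' (hK'K.trans hKS)).1
      exact (hK'K hbK').2 (hXuv (Or.inl hbB))
    -- u ∩ v misses the square
    have hWe : ∀ w : ℝ × ℝ, w ∈ sq → w ∈ u → w ∈ v → False := by
      rintro w hwsq hwu hwv
      have hw2 : w.2 < 1 := by
        rcases lt_or_eq_of_le hwsq.2.2 with h | h
        · exact h
        · exact absurd ⟨Or.inr (hTmem w hwsq h), hwu, hwv⟩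
            (Set.eq_empty_iff_forall_notMem.mp hW w)
      obtain ⟨ε, hε, hball⟩ := Metric.isOpen_iff.mp (hu.inter hv) w ⟨hwu, hwv⟩
      set δ := min (ε/2) (1/2) with hδdef
      have hδ0 : 0 < δ := lt_min (by linarith) (by norm_num)
      have hδε : δ < ε := (min_le_left _ _).trans_lt (by linarith)
      have hδh : δ ≤ 1/2 := min_le_right _ _
      have hkey : ∃ a b' : ℝ, a < b' ∧
          Set.Icc a b' ×ˢ ({w.2} : Set ℝ) ⊆ (u ∩ v) ∩ S := by
        have hsegball : ∀ a b' : ℝ, w.1 - δ ≤ a → b' ≤ w.1 + δ →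
            (0:ℝ) ≤ a → b' ≤ 1 →
            Set.Icc a b' ×ˢ ({w.2} : Set ℝ) ⊆ (u ∩ v) ∩ S := by
          intro a b' ha hb' ha0 hb1
          rintro ⟨t, y⟩ ⟨ht, hy⟩
          simp only [Set.mem_singleton_iff] at hy; subst hy
          refine ⟨hball ?_, ⟨⟨by linarith [ht.1], by linarith [ht.2]⟩,
            hwsq.2.1, hw2⟩⟩
          rw [Metric.mem_ball, Prod.dist_eq]
          refine max_lt ?_ (by simpa using hε)
          rw [Real.dist_eq, abs_lt]
          constructor <;> [linarith [ht.1]; linarith [ht.2]]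
        rcases le_or_gt w.1 (1/2) with h1 | h1
        · refine ⟨w.1, w.1 + δ, by linarith, hsegball _ _ (by linarith) le_rfl
            hwsq.1.1 (by linarith)⟩
        · refine ⟨w.1 - δ, w.1, by linarith, hsegball _ _ le_rfl (by linarith)
            (by linarith) hwsq.1.2⟩
      obtain ⟨a, b', hab, hseg⟩ := hkey
      obtain ⟨K', hK'', hK'⟩ := aux_cantor_in_seg (a := a) (b := b') w.2 hab
      have hK'S : K' ⊆ S := fun x hx => (hseg (hK'' hx)).2
      obtain ⟨b0, hb0B, hb0K⟩ := (hB.2 K' hK' hK'S).1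
      exact (Set.eq_empty_iff_forall_notMem.mp hW b0)
        ⟨Or.inl hb0B, (hseg (hK'' hb0K)).1⟩
    have hpre := aux_square_diff_countable_preconnected hKcount
    have hsub : sq \ K ⊆ u ∪ v := by
      rintro x ⟨hx, hxK⟩
      by_contra hxuv
      exact hxK ⟨hx, hxuv⟩
    obtain ⟨z, ⟨hzsq, _⟩, hzu, hzv⟩ :=
      hpre u v hu hv hsub ⟨p, ⟨hXsq hpX, hKX p hpX⟩, hpu⟩
        ⟨q, ⟨hXsq hqX, hKX q hqX⟩, hqv⟩
    exact hWe z hzsq hzu hzv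
  have hXconn : IsConnected X :=
    ⟨⟨(0, 1), Or.inr ⟨⟨le_refl 0, zero_le_one⟩, rfl⟩⟩, hXpre⟩
  -- cantor copy in X
  have hXcantor : ContainsCantorCopy X := by
    obtain ⟨K, hKT, hK⟩ := hTcantor
    exact ⟨K, hKT.trans Set.subset_union_right, hK⟩
  -- B uncountable
  have hBunc : ¬ B.Countable := by
    intro hBc
    -- bottom segment of S
    obtain ⟨K0, hK0, f, hfc, hfi, hfr⟩ := aux_cantor_in_seg (a := (0:ℝ)) (b := 1) 0 one_pos
    have hK0S : Set.range f ⊆ S := by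
      rw [hfr]
      refine hK0.trans ?_
      rintro ⟨x1, x2⟩ ⟨h1, h2⟩
      rw [Set.mem_singleton_iff] at h2; subst h2
      exact ⟨h1, le_refl 0, one_pos⟩
    -- interleaving
    set j : (ℕ → Bool) → (ℕ → Bool) → (ℕ → Bool) :=
      fun a y n => if n % 2 = 0 then a (n / 2) else y (n / 2) with hjdef
    have hjc : ∀ a, Continuous (j a) := by
      intro a
      apply continuous_pi
      intro n
      by_cases h : n % 2 = 0
      · simp only [hjdef, if_pos h]
        exact continuous_const
      · simp only [hjdef, if_neg h]
        exact continuous_apply (n / 2)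
    have hjinj : ∀ a, Function.Injective (j a) := by
      intro a y y' h
      ext m
      have := congrFun h (2 * m + 1)
      simpa [hjdef, Nat.mul_add_mod, (by omega : (2 * m + 1) % 2 = 1),
        (by omega : (2 * m + 1) / 2 = m)] using this
    have hjsep : ∀ a a' y y', j a y = j a' y' → a = a' := by
      intro a a' y y' h
      ext m
      have := congrFun h (2 * m)
      simpa [hjdef, (by omega : (2 * m) % 2 = 0), (by omega : (2 * m) / 2 = m)] using this
    have hKa : ∀ a : ℕ → Bool, (B ∩ Set.range (f ∘ j a)).Nonempty := by
      intro a
      refine (hB.2 (Set.range (f ∘ j a))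
        ⟨f ∘ j a, hfc.comp (hjc a), hfi.comp (hjinj a), rfl⟩ ?_).1
      exact (Set.range_comp f (j a) ▸ (Set.image_subset_range f _).trans hK0S :)
    set p : (ℕ → Bool) → ℝ × ℝ := fun a => (hKa a).choose with hpdef
    have hpmem : ∀ a, p a ∈ B ∩ Set.range (f ∘ j a) := fun a => (hKa a).choose_spec
    have hpinj : Function.Injective p := by
      intro a a' h
      obtain ⟨y, hy⟩ := (hpmem a).2
      obtain ⟨y', hy'⟩ := (hpmem a').2
      have : f (j a y) = f (j a' y') := by
        simpa [Function.comp] using hy.trans (h.trans hy'.symm)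
      exact hjsep a a' y y' (hfi this)
    have hcr : (Set.range p).Countable := hBc.mono (Set.range_subset_iff.mpr fun a => (hpmem a).1)
    haveI := hcr.to_subtype
    exact aux_uncountable_natBool (Countable.of_equiv _ (Equiv.ofInjective p hpinj).symm)
  -- B open in X
  have hBopen : ∃ U : Set (ℝ × ℝ), IsOpen U ∧ B = U ∩ X := by
    refine ⟨{x : ℝ × ℝ | x.2 < 1}, isOpen_lt continuous_snd continuous_const, ?_⟩
    apply Set.Subset.antisymm
    · intro b hb
      exact ⟨(hBS hb).2.2, Or.inl hb⟩
    · rintro x ⟨hx1, hx2⟩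
      rcases hx2 with h | h
      · exact h
      · exfalso
        have h2 : x.2 = 1 := h.2
        simp only [Set.mem_setOf_eq, h2] at hx1
        exact lt_irrefl 1 hx1
  -- B contains no Cantor copy
  have hBnoc : ¬ ContainsCantorCopy B := by
    rintro ⟨K, hKB, hK⟩
    obtain ⟨y, hy, hyK⟩ := (hB.2 K hK (hKB.trans hBS)).2
    exact hy.2 (hKB hyK)
  refine ⟨hXconn, hXcantor, hBunc, hBopen, hBnoc, ?_, ?_⟩
  · -- PSPclopen
    rintro A ⟨U, hU, hAU⟩ ⟨C, hC, hAC⟩ hAc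
    have hAne : A.Nonempty := by
      rw [Set.nonempty_iff_ne_empty]
      intro h
      exact hAc (h ▸ Set.countable_empty)
    have hXC : X ⊆ C := by
      by_contra hXC
      obtain ⟨x, hxX, hxC⟩ := Set.not_subset.mp hXC
      obtain ⟨y, hyX, hyU, hyC⟩ := hXpre U Cᶜ hU hC.isOpen_compl
        (by
          intro z hz
          by_cases hzA : z ∈ A
          · exact Or.inl (by rw [hAU] at hzA; exact hzA.1)
          · refine Or.inr fun hzC => hzA ?_
            rw [hAC]; exact ⟨hzC, hz⟩)
        (by
          obtain ⟨a, ha⟩ := hAne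
          have h1 := ha; rw [hAU] at h1
          exact ⟨a, h1.2, h1.1⟩)
        ⟨x, hxX, hxC⟩
      have : y ∈ A := by rw [hAU]; exact ⟨hyU, hyX⟩
      rw [hAC] at this
      exact hyC this.1
    have hAX : A = X := by
      rw [hAC, Set.inter_eq_right.mpr hXC]
    obtain ⟨K, hKT, hK⟩ := hTcantor
    exact ⟨K, by rw [hAX]; exact hKT.trans Set.subset_union_right, hK⟩
  · -- not PSPopen
    intro h
    obtain ⟨U, hU, hBU⟩ := hBopen
    exact hBnoc (hBU ▸ h U hU (hBU ▸ hBunc))
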